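/- Let 3/2 < p < 2 and 1/q = 2/p − 1/3. For all t ≥ 0, η(t) ≤ ∏_{i=1}^N exp(3|b_i(t)|(|h_i|_{L¹} + |λ_i|) − t·α_i), where α_i := λ_i²/2 − (3/2)(|h_i|_{L¹}² + 2|λ_i| |h_i|_{L¹}). Moreover, if |λ_i| > (√12 + 3)|h_i|_{L¹} for all i, then α_i > 0 for all i. -/

import Mathlib

open MeasureTheory Real Filter ENNReal

noncomputable section

namespace RandomVorticity

/-- The underlying space `ℝ³`. -/
abbrev E : Type := EuclideanSpace ℝ (Fin 3)

/-- The cross product on `ℝ³`. -/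
def cross3 (a b : E) : E :=
  WithLp.toLp 2 ![a 1 * b 2 - a 2 * b 1, a 2 * b 0 - a 0 * b 2, a 0 * b 1 - a 1 * b 0]

/-- Componentwise convolution of a scalar kernel with a vector field. -/
def conv (h : E → ℝ) (u : E → E) : E → E := fun ξ => ∫ ξ', h (ξ - ξ') • u ξ'

/-- Iterated convolution operator `Bⁿ`, `B u = h * u`. -/
def convIter (h : E → ℝ) : ℕ → (E → E) → E → E
  | 0, u => u
  | n + 1, u => conv h (convIter h n u)

/-- The quadratic polynomial `q(X) = (βλ − τλ²/2) + (β − τλ)X − (τ/2)X²`, so that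
`β B̃ − (τ/2) B̃² = q(B)` where `B̃ = B + λI`. -/
def gammaPoly (β τ lam : ℝ) : Polynomial ℝ :=
  Polynomial.C (β * lam - τ * lam ^ 2 / 2) + Polynomial.C (β - τ * lam) * Polynomial.X -
    Polynomial.C (τ / 2) * Polynomial.X ^ 2

/-- Coefficient of `Xⁿ` in the entire series `exp (q(X))`. -/
def expCoeff (q : Polynomial ℝ) (n : ℕ) : ℝ := ∑' m : ℕ, (q ^ m).coeff n / (Nat.factorial m)

/-- The operator `exp (q(B))`, where `B` is convolution with `h`. -/
def expConvOp (h : E → ℝ) (q : Polynomial ℝ) (u : E → E) : E → E :=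
  fun ξ => ∑' n : ℕ, expCoeff q n • convIter h n u ξ

/-- `Γ(t) = ∏ᵢ exp (bᵢ(t) B̃ᵢ − (t/2) B̃ᵢ²)`, `B̃ᵢ = Bᵢ + λᵢ I`, `Bᵢ u = hᵢ * u`. -/
def GammaOp {N : ℕ} (h : Fin N → E → ℝ) (lam : Fin N → ℝ) (b : Fin N → ℝ → ℝ) (t : ℝ)
    (u : E → E) : E → E :=
  ((List.finRange N).map fun i => expConvOp (h i) (gammaPoly (b i t) t (lam i))).foldr
    (fun f v => f v) u

/-- `Γ(t)⁻¹ = ∏ᵢ exp (−bᵢ(t) B̃ᵢ + (t/2) B̃ᵢ²)`. -/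
def GammaInvOp {N : ℕ} (h : Fin N → E → ℝ) (lam : Fin N → ℝ) (b : Fin N → ℝ → ℝ) (t : ℝ)
    (u : E → E) : E → E :=
  ((List.finRange N).map fun i => expConvOp (h i) (-gammaPoly (b i t) t (lam i))).foldr
    (fun f v => f v) u

/-- Standard basis vector of `ℝ³`. -/
def stdb (j : Fin 3) : E := EuclideanSpace.single j (1 : ℝ)

/-- `v` is the `j`-th weak (distributional) partial derivative of `u`. -/
def HasWeakDeriv (j : Fin 3) (u v : E → E) : Prop :=
  LocallyIntegrable u volume ∧ LocallyIntegrable v volume ∧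
    ∀ φ : E → ℝ, ContDiff ℝ (⊤ : ℕ∞) φ → HasCompactSupport φ →
      ∫ ξ, fderiv ℝ φ ξ (stdb j) • u ξ = -∫ ξ, φ ξ • v ξ

open Classical in
/-- The `j`-th weak partial derivative `D_j u` (an arbitrary representative; `0` if none). -/
def wD (j : Fin 3) (u : E → E) : E → E :=
  if h : ∃ v, HasWeakDeriv j u v then h.choose else 0

/-- The heat semigroup `e^{tΔ}` (convolution with the heat kernel; identity for `t ≤ 0`). -/
def heat (t : ℝ) (u : E → E) : E → E :=
  if t ≤ 0 then u
  else fun ξ => ((4 * π * t) ^ (-(3 : ℝ) / 2)) • ∫ ξ', Real.exp (-‖ξ - ξ'‖ ^ 2 / (4 * t)) • u ξ'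

/-- The Biot–Savart operator `K`. -/
def biotSavart (u : E → E) : E → E :=
  fun ξ => (-(4 * π)⁻¹) • ∫ ξ', cross3 ((‖ξ - ξ'‖ ^ 3)⁻¹ • (ξ - ξ')) (u ξ')

/-- `(v·∇)w`. -/
def advect (v w : E → E) : E → E := fun ξ => ∑ i : Fin 3, v ξ i • wD i w ξ

/-- `M(u) = −[(K(u)·∇)u − (u·∇)K(u)]`. -/
def Mop (u : E → E) : E → E :=
  fun ξ => advect u (biotSavart u) ξ - advect (biotSavart u) u ξ

/-- Operator norm of a map on `L^r`. -/
def opNorm (r : ℝ≥0∞) (T : (E → E) → E → E) : ℝ≥0∞ :=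
  ⨆ u : {u : E → E // MemLp u r volume ∧ eLpNorm u r volume ≤ 1}, eLpNorm (T u.1) r volume

/-- `η(t) = ‖Γ(t)‖_{L(L^p,L^p)} ‖Γ(t)‖_{L(L^{3p/(3−p)},L^{3p/(3−p)})} ‖Γ(t)⁻¹‖_{L(L^q,L^q)}`. -/
def eta {N : ℕ} (h : Fin N → E → ℝ) (lam : Fin N → ℝ) (b : Fin N → ℝ → ℝ) (p q : ℝ)
    (t : ℝ) : ℝ≥0∞ :=
  opNorm (ENNReal.ofReal p) (GammaOp h lam b t) *
    opNorm (ENNReal.ofReal (3 * p / (3 - p))) (GammaOp h lam b t) *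
    opNorm (ENNReal.ofReal q) (GammaInvOp h lam b t)

/-- `sup_{t ≥ 0} η(t)`. -/
def etaSup {N : ℕ} (h : Fin N → E → ℝ) (lam : Fin N → ℝ) (b : Fin N → ℝ → ℝ)
    (p q : ℝ) : ℝ≥0∞ :=
  ⨆ t : {t : ℝ // 0 ≤ t}, eta h lam b p q t.1

/-- The norm `‖·‖_{p,∞}` of the Kato space `Z_p`. -/
def Znorm (p : ℝ) (y : ℝ → E → E) : ℝ≥0∞ :=
  ⨆ (t : {t : ℝ // 0 < t}) (j : Fin 3),
    (ENNReal.ofReal ((t : ℝ) ^ (1 - 3 / (2 * p))) * eLpNorm (y t.1) (ENNReal.ofReal p) volume +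
      ENNReal.ofReal ((t : ℝ) ^ (3 / 2 * (1 - 1 / p))) *
        eLpNorm (wD j (y t.1)) (ENNReal.ofReal p) volume)

/-- Continuity from `[0,∞)` into `L^r`. -/
def ContL (r : ℝ≥0∞) (w : ℝ → E → E) : Prop :=
  ∀ t₀ : ℝ, 0 ≤ t₀ →
    Tendsto (fun t => eLpNorm (w t - w t₀) r volume) (nhdsWithin t₀ (Set.Ici 0)) (nhds 0)

/-- Membership in the Kato space `Z_p`. -/
def MemZ (p : ℝ) (y : ℝ → E → E) : Prop :=
  (∀ t, 0 < t → MemLp (y t) (ENNReal.ofReal p) volume) ∧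
  (∀ t, 0 < t → ∀ j, MemLp (wD j (y t)) (ENNReal.ofReal p) volume) ∧
  Znorm p y < ⊤ ∧
  ContL (ENNReal.ofReal p) (fun t => (t ^ (1 - 3 / (2 * p)) : ℝ) • y t) ∧
  ∀ j, ContL (ENNReal.ofReal p) (fun t => (t ^ (3 / 2 * (1 - 1 / p)) : ℝ) • wD j (y t))

/-- The integral operator `F(z)(t) = ∫₀ᵗ e^{(t−s)Δ} Γ(s)⁻¹ M(Γ(s) z(s)) ds`. -/
def Fop {N : ℕ} (h : Fin N → E → ℝ) (lam : Fin N → ℝ) (b : Fin N → ℝ → ℝ)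
    (z : ℝ → E → E) (t : ℝ) : E → E :=
  fun ξ =>
    ∫ s in Set.Ioc 0 t, heat (t - s) (GammaInvOp h lam b s (Mop (GammaOp h lam b s (z s)))) ξ

/-- `y` is a mild solution: `y(t) = e^{tΔ}U₀ + ∫₀ᵗ e^{(t−s)Δ} Γ(s)⁻¹ M(Γ(s) y(s)) ds`. -/
def IsMildSolution {N : ℕ} (h : Fin N → E → ℝ) (lam : Fin N → ℝ) (b : Fin N → ℝ → ℝ)
    (U₀ : E → E) (y : ℝ → E → E) : Prop :=
  ∀ t, 0 ≤ t → y t =ᵐ[volume] fun ξ => heat t U₀ ξ + Fop h lam b y t ξ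

/-- The `L¹`-norm of a scalar kernel. -/
def l1norm (h : E → ℝ) : ℝ := ∫ ξ, |h ξ|

/-- The standing assumptions on the data: `hᵢ ∈ L¹`, `bᵢ` continuous on `[0,∞)`, `bᵢ(0) = 0`. -/
def KernelData {N : ℕ} (h : Fin N → E → ℝ) (b : Fin N → ℝ → ℝ) : Prop :=
  (∀ i, Integrable (h i) volume) ∧ (∀ i, ContinuousOn (b i) (Set.Ici 0)) ∧ ∀ i, b i 0 = 0


section Proof

set_option maxHeartbeats 1000000

open Polynomial Filter
open scoped NNReal

/-- Local abbreviation for the volume measure on `E`. -/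
noncomputable abbrev muE : Measure E := (volume : Measure E)

/-! ### Translation invariance of `lintegral` -/

noncomputable def mesubLeft (g : E) : MeasurableEquiv E E :=
  ⟨Equiv.subLeft g, measurable_const.sub measurable_id, by
    have : ⇑(Equiv.subLeft g).symm = fun x => g - x := by
      ext x; simp [Equiv.subLeft, sub_eq_neg_add]
    rw [this]; exact measurable_const.sub measurable_id⟩

noncomputable def mesubRight (g : E) : MeasurableEquiv E E :=
  ⟨Equiv.subRight g, measurable_id.sub measurable_const, by
    have : ⇑(Equiv.subRight g).symm = fun x => x + g := by
      ext x; simp [Equiv.subRight]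
    rw [this]; exact measurable_id.add measurable_const⟩

lemma lint_subLeft (f : E → ℝ≥0∞) (g : E) : ∫⁻ x, f (g - x) = ∫⁻ x, f x :=
  (Measure.measurePreserving_sub_left volume g).lintegral_comp_emb
    ((mesubLeft g).measurableEmbedding) f

lemma lint_subRight (f : E → ℝ≥0∞) (g : E) : ∫⁻ x, f (x - g) = ∫⁻ x, f x :=
  (measurePreserving_sub_right volume g).lintegral_comp_emb
    ((mesubRight g).measurableEmbedding) f

/-! ### Measurability of the convolution -/

lemma aesm_conv {h : E → ℝ} {u : E → E} (hh : AEStronglyMeasurable h muE)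
    (hu : AEStronglyMeasurable u muE) : AEStronglyMeasurable (conv h u) muE := by
  have h1 : AEStronglyMeasurable (fun pr : E × E => h (pr.1 - pr.2) • u pr.2)
      (muE.prod muE) := by
    refine AEStronglyMeasurable.smul (f := fun pr : E × E => h (pr.1 - pr.2))
      (g := fun pr : E × E => u pr.2) ?_ ?_
    · exact hh.comp_quasiMeasurePreserving
        (quasiMeasurePreserving_sub_of_right_invariant muE muE)
    · exact hu.comp_quasiMeasurePreserving Measure.quasiMeasurePreserving_snd
  exact h1.integral_prod_right'

lemma nnnorm_conv_le (h : E → ℝ) (u : E → E) (ξ : E) :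
    (‖conv h u ξ‖₊ : ℝ≥0∞) ≤ ∫⁻ ξ', (‖h (ξ - ξ')‖₊ : ℝ≥0∞) * ‖u ξ'‖₊ := by
  refine le_trans (enorm_integral_le_lintegral_enorm _) (le_of_eq ?_)
  refine lintegral_congr fun ξ' => ?_
  rw [enorm_smul, enorm_eq_nnnorm, enorm_eq_nnnorm]

/-! ### Young's inequality -/

lemma young_aux {p' q' : ℝ} (hpq : p'.HolderConjugate q') {H U : E → ℝ≥0∞}
    (hH : AEMeasurable H muE) (hU : AEMeasurable U muE) (hA : (∫⁻ x, H x) ≠ ⊤) :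
    ∫⁻ ξ, (∫⁻ ξ', H (ξ - ξ') * U ξ') ^ p' ≤ (∫⁻ x, H x) ^ p' * ∫⁻ ξ, U ξ ^ p' := by
  have hp0 : 0 < p' := hpq.pos
  have hq0 : 0 < q' := hpq.symm.pos
  have hApq : (∫⁻ x, H x) ^ (p' / q') ≠ ⊤ :=
    ENNReal.rpow_ne_top_of_nonneg (div_nonneg hp0.le hq0.le) hA
  have hpq1 : p' / q' + 1 = p' := by
    have h1 : p'⁻¹ + q'⁻¹ = 1 := hpq.inv_add_inv_eq_one
    field_simp at h1 ⊢
    linarith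
  have key : ∀ ξ, (∫⁻ ξ', H (ξ - ξ') * U ξ') ^ p' ≤
      (∫⁻ x, H x) ^ (p' / q') * ∫⁻ ξ', H (ξ - ξ') * U ξ' ^ p' := by
    intro ξ
    have hHm : AEMeasurable (fun ξ' => H (ξ - ξ')) muE :=
      hH.comp_quasiMeasurePreserving
        (Measure.measurePreserving_sub_left volume ξ).quasiMeasurePreserving
    have step : (∫⁻ ξ', H (ξ - ξ') * U ξ') ≤
        (∫⁻ x, H x) ^ (1 / q') * (∫⁻ ξ', H (ξ - ξ') * U ξ' ^ p') ^ (1 / p') := by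
    -- Hölder
      have hol := ENNReal.lintegral_mul_le_Lp_mul_Lq muE hpq.symm
        (f := fun ξ' => H (ξ - ξ') ^ (1 / q'))
        (g := fun ξ' => H (ξ - ξ') ^ (1 / p') * U ξ')
        (hHm.pow_const _) ((hHm.pow_const _).mul hU)
      have e1 : ∀ ξ', H (ξ - ξ') ^ (1 / q') * (H (ξ - ξ') ^ (1 / p') * U ξ') =
          H (ξ - ξ') * U ξ' := by
        intro ξ'
        rw [← mul_assoc, ← ENNReal.rpow_add_of_nonneg _ _ (one_div_nonneg.2 hq0.le)
          (one_div_nonneg.2 hp0.le), one_div, one_div, hpq.symm.inv_add_inv_eq_one,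
          ENNReal.rpow_one]
      have e2 : ∫⁻ ξ', (H (ξ - ξ') ^ (1 / q')) ^ q' = ∫⁻ x, H x := by
        rw [lintegral_congr fun ξ' => by
          rw [one_div, ENNReal.rpow_inv_rpow hq0.ne']]
        exact lint_subLeft H ξ
      have e3 : ∫⁻ ξ', (H (ξ - ξ') ^ (1 / p') * U ξ') ^ p' =
          ∫⁻ ξ', H (ξ - ξ') * U ξ' ^ p' := by
        refine lintegral_congr fun ξ' => ?_
        rw [ENNReal.mul_rpow_of_nonneg _ _ hp0.le, one_div,
          ENNReal.rpow_inv_rpow hp0.ne']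
      calc (∫⁻ ξ', H (ξ - ξ') * U ξ')
          = ∫⁻ ξ', (fun ξ'' => H (ξ - ξ'') ^ (1 / q')) ξ' *
              ((fun ξ'' => H (ξ - ξ'') ^ (1 / p') * U ξ'') ξ') := by
            exact lintegral_congr fun ξ' => (e1 ξ').symm
        _ ≤ (∫⁻ ξ', (H (ξ - ξ') ^ (1 / q')) ^ q') ^ (1 / q') *
              (∫⁻ ξ', (H (ξ - ξ') ^ (1 / p') * U ξ') ^ p') ^ (1 / p') := hol
        _ = (∫⁻ x, H x) ^ (1 / q') * (∫⁻ ξ', H (ξ - ξ') * U ξ' ^ p') ^ (1 / p') := by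
            rw [e2, e3]
    calc (∫⁻ ξ', H (ξ - ξ') * U ξ') ^ p'
        ≤ ((∫⁻ x, H x) ^ (1 / q') * (∫⁻ ξ', H (ξ - ξ') * U ξ' ^ p') ^ (1 / p')) ^ p' :=
          ENNReal.rpow_le_rpow step hp0.le
      _ = (∫⁻ x, H x) ^ (p' / q') * ∫⁻ ξ', H (ξ - ξ') * U ξ' ^ p' := by
          rw [ENNReal.mul_rpow_of_nonneg _ _ hp0.le, ← ENNReal.rpow_mul,
            ← ENNReal.rpow_mul]
          congr 1
          · congr 1; field_simp
          · rw [one_div, inv_mul_cancel₀ hp0.ne', ENNReal.rpow_one]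
  have swap : ∫⁻ ξ, ∫⁻ ξ', H (ξ - ξ') * U ξ' ^ p' = (∫⁻ x, H x) * ∫⁻ ξ, U ξ ^ p' := by
    have hup : AEMeasurable (fun ξ' => U ξ' ^ p') muE := hU.pow_const _
    have hprod : AEMeasurable (Function.uncurry fun ξ ξ' => H (ξ - ξ') * U ξ' ^ p')
        (muE.prod muE) := by
      refine AEMeasurable.mul (f := fun pr : E × E => H (pr.1 - pr.2))
        (g := fun pr : E × E => U pr.2 ^ p') ?_ ?_
      · exact hH.comp_quasiMeasurePreserving
          (quasiMeasurePreserving_sub_of_right_invariant muE muE)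
      · exact hup.comp_snd
    rw [lintegral_lintegral_swap hprod]
    have inner : ∀ ξ', ∫⁻ ξ, H (ξ - ξ') * U ξ' ^ p' = (∫⁻ x, H x) * U ξ' ^ p' := by
      intro ξ'
      have hm : AEMeasurable (fun ξ : E => H (ξ - ξ')) muE :=
        hH.comp_quasiMeasurePreserving
          (measurePreserving_sub_right volume ξ').quasiMeasurePreserving
      rw [lintegral_mul_const'' (U ξ' ^ p') hm, lint_subRight H ξ']
    rw [lintegral_congr inner]
    exact lintegral_const_mul' _ _ hA
  calc ∫⁻ ξ, (∫⁻ ξ', H (ξ - ξ') * U ξ') ^ p'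
      ≤ ∫⁻ ξ, (∫⁻ x, H x) ^ (p' / q') * ∫⁻ ξ', H (ξ - ξ') * U ξ' ^ p' :=
        lintegral_mono key
    _ = (∫⁻ x, H x) ^ (p' / q') * ∫⁻ ξ, ∫⁻ ξ', H (ξ - ξ') * U ξ' ^ p' :=
        lintegral_const_mul' _ _ hApq
    _ = (∫⁻ x, H x) ^ (p' / q') * ((∫⁻ x, H x) * ∫⁻ ξ, U ξ ^ p') := by rw [swap]
    _ = (∫⁻ x, H x) ^ p' * ∫⁻ ξ, U ξ ^ p' := by
        rw [← mul_assoc]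
        congr 1
        calc (∫⁻ x, H x) ^ (p' / q') * (∫⁻ x, H x)
            = (∫⁻ x, H x) ^ (p' / q') * (∫⁻ x, H x) ^ (1 : ℝ) := by rw [ENNReal.rpow_one]
          _ = (∫⁻ x, H x) ^ (p' / q' + 1) := by
              rw [← ENNReal.rpow_add_of_nonneg _ _ (div_nonneg hp0.le hq0.le) zero_le_one]
          _ = (∫⁻ x, H x) ^ p' := by rw [hpq1]

lemma eLpNorm_ofReal_eq {p' : ℝ} (hp : 0 < p') (f : E → E) :
    eLpNorm f (ENNReal.ofReal p') muE = (∫⁻ ξ, (‖f ξ‖₊ : ℝ≥0∞) ^ p') ^ (1 / p') := by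
  rw [eLpNorm_eq_lintegral_rpow_enorm_toReal (by simp [hp.not_ge])
    ENNReal.ofReal_ne_top, ENNReal.toReal_ofReal hp.le]
  rfl

lemma eLpNorm_conv_le {p' q' : ℝ} (hpq : p'.HolderConjugate q') {h : E → ℝ} {u : E → E}
    (hh : Integrable h muE) (hu : AEStronglyMeasurable u muE) :
    eLpNorm (conv h u) (ENNReal.ofReal p') muE ≤
      (∫⁻ x, (‖h x‖₊ : ℝ≥0∞)) * eLpNorm u (ENNReal.ofReal p') muE := by
  have hp0 : 0 < p' := hpq.pos
  have hA : (∫⁻ x, (‖h x‖₊ : ℝ≥0∞)) ≠ ⊤ := hh.2.ne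
  rw [eLpNorm_ofReal_eq hp0, eLpNorm_ofReal_eq hp0]
  calc (∫⁻ ξ, (‖conv h u ξ‖₊ : ℝ≥0∞) ^ p') ^ (1 / p')
      ≤ (∫⁻ ξ, (∫⁻ ξ', (‖h (ξ - ξ')‖₊ : ℝ≥0∞) * ‖u ξ'‖₊) ^ p') ^ (1 / p') := by
        refine ENNReal.rpow_le_rpow (lintegral_mono fun ξ => ?_) (one_div_nonneg.2 hp0.le)
        exact ENNReal.rpow_le_rpow (nnnorm_conv_le h u ξ) hp0.le
    _ ≤ ((∫⁻ x, (‖h x‖₊ : ℝ≥0∞)) ^ p' * ∫⁻ ξ, (‖u ξ‖₊ : ℝ≥0∞) ^ p') ^ (1 / p') := by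
        refine ENNReal.rpow_le_rpow ?_ (one_div_nonneg.2 hp0.le)
        exact young_aux hpq hh.aestronglyMeasurable.enorm hu.enorm hA
    _ = (∫⁻ x, (‖h x‖₊ : ℝ≥0∞)) * (∫⁻ ξ, (‖u ξ‖₊ : ℝ≥0∞) ^ p') ^ (1 / p') := by
        rw [ENNReal.mul_rpow_of_nonneg _ _ (one_div_nonneg.2 hp0.le), one_div,
          ENNReal.rpow_rpow_inv hp0.ne']

lemma convIter_bound {p' q' : ℝ} (hpq : p'.HolderConjugate q') {h : E → ℝ}
    (hh : Integrable h muE) {u : E → E} (hu : AEStronglyMeasurable u muE) (n : ℕ) :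
    AEStronglyMeasurable (convIter h n u) muE ∧
      eLpNorm (convIter h n u) (ENNReal.ofReal p') muE ≤
        (∫⁻ x, (‖h x‖₊ : ℝ≥0∞)) ^ n * eLpNorm u (ENNReal.ofReal p') muE := by
  induction n with
  | zero => exact ⟨hu, by simp [convIter]⟩
  | succ n ih =>
    refine ⟨aesm_conv hh.aestronglyMeasurable ih.1, ?_⟩
    calc eLpNorm (convIter h (n + 1) u) (ENNReal.ofReal p') muE
        = eLpNorm (conv h (convIter h n u)) (ENNReal.ofReal p') muE := rfl
      _ ≤ (∫⁻ x, (‖h x‖₊ : ℝ≥0∞)) * eLpNorm (convIter h n u) (ENNReal.ofReal p') muE :=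
          eLpNorm_conv_le hpq hh ih.1
      _ ≤ (∫⁻ x, (‖h x‖₊ : ℝ≥0∞)) *
            ((∫⁻ x, (‖h x‖₊ : ℝ≥0∞)) ^ n * eLpNorm u (ENNReal.ofReal p') muE) :=
          mul_le_mul_right ih.2 _
      _ = (∫⁻ x, (‖h x‖₊ : ℝ≥0∞)) ^ (n + 1) * eLpNorm u (ENNReal.ofReal p') muE := by
          rw [← mul_assoc, pow_succ, mul_comm ((∫⁻ x, (‖h x‖₊ : ℝ≥0∞)) ^ n) _]

/-! ### A countable Minkowski inequality -/

lemma lp_tsum_le {p' : ℝ} (hp : 1 ≤ p') (f : ℕ → E → E)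
    (hf : ∀ n, AEStronglyMeasurable (f n) muE) :
    (∫⁻ ξ, (∑' n, (‖f n ξ‖₊ : ℝ≥0∞)) ^ p') ^ (1 / p') ≤
      ∑' n, (∫⁻ ξ, (‖f n ξ‖₊ : ℝ≥0∞) ^ p') ^ (1 / p') := by
  have hp0 : 0 < p' := lt_of_lt_of_le one_pos hp
  set F : ℕ → E → ℝ≥0∞ := fun N ξ => ∑ n ∈ Finset.range N, (‖f n ξ‖₊ : ℝ≥0∞) with hF
  have hFmeas : ∀ N, AEMeasurable (F N) muE :=
    fun N => Finset.aemeasurable_fun_sum _ fun n _ => (hf n).enorm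
  have hstep : ∀ N, (∫⁻ ξ, F N ξ ^ p') ^ (1 / p') ≤
      ∑ n ∈ Finset.range N, (∫⁻ ξ, (‖f n ξ‖₊ : ℝ≥0∞) ^ p') ^ (1 / p') := by
    intro N
    induction N with
    | zero =>
      have e0 : ∀ ξ : E, F 0 ξ ^ p' = 0 := fun ξ => by
        simp [hF, ENNReal.zero_rpow_of_pos hp0]
      rw [lintegral_congr e0, lintegral_zero,
        ENNReal.zero_rpow_of_pos (one_div_pos.2 hp0)]
      simp
    | succ N ihN =>
      have hFs : F (N + 1) = fun ξ => F N ξ + (‖f N ξ‖₊ : ℝ≥0∞) := by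
        funext ξ; rw [hF]; simp [Finset.sum_range_succ]
      calc (∫⁻ ξ, F (N + 1) ξ ^ p') ^ (1 / p')
          = (∫⁻ ξ, (F N ξ + (‖f N ξ‖₊ : ℝ≥0∞)) ^ p') ^ (1 / p') := by rw [hFs]
        _ ≤ (∫⁻ ξ, F N ξ ^ p') ^ (1 / p') +
              (∫⁻ ξ, (‖f N ξ‖₊ : ℝ≥0∞) ^ p') ^ (1 / p') :=
            ENNReal.lintegral_Lp_add_le (hFmeas N) (hf N).enorm hp
        _ ≤ ∑ n ∈ Finset.range N, (∫⁻ ξ, (‖f n ξ‖₊ : ℝ≥0∞) ^ p') ^ (1 / p') +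
              (∫⁻ ξ, (‖f N ξ‖₊ : ℝ≥0∞) ^ p') ^ (1 / p') := add_le_add_left ihN _
        _ = ∑ n ∈ Finset.range (N + 1), (∫⁻ ξ, (‖f n ξ‖₊ : ℝ≥0∞) ^ p') ^ (1 / p') := by
            rw [Finset.sum_range_succ]
  have hiSup : ∫⁻ ξ, (∑' n, (‖f n ξ‖₊ : ℝ≥0∞)) ^ p' = ⨆ N, ∫⁻ ξ, F N ξ ^ p' := by
    have e1 : ∀ ξ, (∑' n, (‖f n ξ‖₊ : ℝ≥0∞)) ^ p' = ⨆ N, F N ξ ^ p' := by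
      intro ξ
      rw [ENNReal.tsum_eq_iSup_nat]
      refine Monotone.map_iSup_of_continuousAt (f := fun x : ℝ≥0∞ => x ^ p') ?_ ?_ ?_
      · exact ENNReal.continuous_rpow_const.continuousAt
      · intro a b hab; exact ENNReal.rpow_le_rpow hab hp0.le
      · exact ENNReal.zero_rpow_of_pos hp0
    rw [lintegral_congr e1]
    refine lintegral_iSup' (fun N => (hFmeas N).pow_const _) ?_
    refine Eventually.of_forall fun ξ N M hNM => ?_
    refine ENNReal.rpow_le_rpow ?_ hp0.le
    exact Finset.sum_le_sum_of_subset (Finset.range_subset_range.2 hNM)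
  rw [hiSup]
  have hmain : (⨆ N, ∫⁻ ξ, F N ξ ^ p') ≤
      (∑' n, (∫⁻ ξ, (‖f n ξ‖₊ : ℝ≥0∞) ^ p') ^ (1 / p')) ^ p' := by
    refine iSup_le fun N => ?_
    have h1 := ENNReal.rpow_le_rpow (hstep N) hp0.le
    have h2 : ((∫⁻ ξ, F N ξ ^ p') ^ (1 / p')) ^ p' = ∫⁻ ξ, F N ξ ^ p' := by
      rw [one_div, ENNReal.rpow_inv_rpow hp0.ne']
    rw [h2] at h1
    refine h1.trans ?_
    refine ENNReal.rpow_le_rpow ?_ hp0.le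
    exact ENNReal.sum_le_tsum _
  calc (⨆ N, ∫⁻ ξ, F N ξ ^ p') ^ (1 / p')
      ≤ (((∑' n, (∫⁻ ξ, (‖f n ξ‖₊ : ℝ≥0∞) ^ p') ^ (1 / p')) ^ p')) ^ (1 / p') :=
        ENNReal.rpow_le_rpow hmain (one_div_nonneg.2 hp0.le)
    _ = ∑' n, (∫⁻ ξ, (‖f n ξ‖₊ : ℝ≥0∞) ^ p') ^ (1 / p') := by
        rw [one_div, ENNReal.rpow_rpow_inv hp0.ne']

/-! ### The exponential series of a convolution operator -/

/-- `∑' n, ‖(exp q)_n‖ A^n`, the natural bound for `exp (q(B))` when `‖B‖ ≤ A`. -/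
def coefSum (q : Polynomial ℝ) (A : ℝ≥0∞) : ℝ≥0∞ :=
  ∑' n, (‖expCoeff q n‖₊ : ℝ≥0∞) * A ^ n

lemma expConvOp_bound {p' q' : ℝ} (hpq : p'.HolderConjugate q') {h : E → ℝ}
    (hh : Integrable h muE) (q : Polynomial ℝ) {u : E → E}
    (hu : MemLp u (ENNReal.ofReal p') muE)
    (hS : coefSum q (∫⁻ x, (‖h x‖₊ : ℝ≥0∞)) ≠ ⊤) :
    MemLp (expConvOp h q u) (ENNReal.ofReal p') muE ∧
      eLpNorm (expConvOp h q u) (ENNReal.ofReal p') muE ≤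
        coefSum q (∫⁻ x, (‖h x‖₊ : ℝ≥0∞)) * eLpNorm u (ENNReal.ofReal p') muE := by
  have hp0 : 0 < p' := hpq.pos
  have hp1 : 1 ≤ p' := hpq.lt.le
  set A := ∫⁻ x, (‖h x‖₊ : ℝ≥0∞) with hAdef
  set fn : ℕ → E → E := fun n ξ => expCoeff q n • convIter h n u ξ with hfndef
  have hfn : ∀ n, AEStronglyMeasurable (fn n) muE := fun n =>
    ((convIter_bound hpq hh hu.1 n).1).const_smul (expCoeff q n)
  have hfnnorm : ∀ n, (∫⁻ ξ, (‖fn n ξ‖₊ : ℝ≥0∞) ^ p') ^ (1 / p') ≤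
      (‖expCoeff q n‖₊ : ℝ≥0∞) * A ^ n * eLpNorm u (ENNReal.ofReal p') muE := by
    intro n
    have e1 : (∫⁻ ξ, (‖fn n ξ‖₊ : ℝ≥0∞) ^ p') ^ (1 / p') =
        eLpNorm (fn n) (ENNReal.ofReal p') muE := (eLpNorm_ofReal_eq hp0 _).symm
    rw [e1]
    have e2 : eLpNorm (fn n) (ENNReal.ofReal p') muE =
        (‖expCoeff q n‖₊ : ℝ≥0∞) * eLpNorm (convIter h n u) (ENNReal.ofReal p') muE := by
      have : fn n = expCoeff q n • convIter h n u := rfl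
      rw [this, eLpNorm_const_smul]
      rfl
    rw [e2, mul_assoc]
    exact mul_le_mul_right (convIter_bound hpq hh hu.1 n).2 _
  set G : E → ℝ≥0∞ := fun ξ => ∑' n, (‖fn n ξ‖₊ : ℝ≥0∞) with hGdef
  have hGle : (∫⁻ ξ, G ξ ^ p') ^ (1 / p') ≤
      coefSum q A * eLpNorm u (ENNReal.ofReal p') muE := by
    refine (lp_tsum_le hp1 fn hfn).trans ?_
    calc ∑' n, (∫⁻ ξ, (‖fn n ξ‖₊ : ℝ≥0∞) ^ p') ^ (1 / p')
        ≤ ∑' n, (‖expCoeff q n‖₊ : ℝ≥0∞) * A ^ n * eLpNorm u (ENNReal.ofReal p') muE :=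
          ENNReal.tsum_le_tsum hfnnorm
      _ = coefSum q A * eLpNorm u (ENNReal.ofReal p') muE := by
          rw [coefSum, ENNReal.tsum_mul_right]
  have hfin2 : coefSum q A * eLpNorm u (ENNReal.ofReal p') muE ≠ ⊤ :=
    ENNReal.mul_ne_top hS hu.2.ne
  have hGfin : ∫⁻ ξ, G ξ ^ p' ≠ ⊤ := by
    intro hcon
    rw [hcon, ENNReal.top_rpow_of_pos (one_div_pos.2 hp0)] at hGle
    exact hfin2 (top_le_iff.1 hGle)
  have hGmeas : AEMeasurable G muE := AEMeasurable.ennreal_tsum fun n => (hfn n).enorm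
  have hGae : ∀ᵐ ξ ∂muE, G ξ < ⊤ := by
    have h1 : ∀ᵐ ξ ∂muE, G ξ ^ p' < ⊤ := ae_lt_top' (hGmeas.pow_const _) hGfin
    refine h1.mono fun ξ hξ => ?_
    by_contra hc
    push_neg at hc
    rw [top_le_iff.1 hc, ENNReal.top_rpow_of_pos hp0] at hξ
    exact absurd hξ (lt_irrefl _)
  have hsum : ∀ᵐ ξ ∂muE, Summable fun n => ‖fn n ξ‖₊ := by
    refine hGae.mono fun ξ hξ => ?_
    rw [← ENNReal.tsum_coe_ne_top_iff_summable]
    exact hξ.ne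
  have htend : ∀ᵐ ξ ∂muE, Tendsto (fun N => ∑ n ∈ Finset.range N, fn n ξ) atTop
      (nhds (expConvOp h q u ξ)) := by
    refine hsum.mono fun ξ hξ => ?_
    have : expConvOp h q u ξ = ∑' n, fn n ξ := rfl
    rw [this]
    exact hξ.of_nnnorm.hasSum.tendsto_sum_nat
  have haesm : AEStronglyMeasurable (expConvOp h q u) muE := by
    refine aestronglyMeasurable_of_tendsto_ae atTop
      (fun N => Finset.aestronglyMeasurable_fun_sum _ fun n _ => hfn n) htend
  have hle : ∀ᵐ ξ ∂muE, (‖expConvOp h q u ξ‖₊ : ℝ≥0∞) ≤ G ξ := by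
    refine hsum.mono fun ξ hξ => ?_
    have e1 : expConvOp h q u ξ = ∑' n, fn n ξ := rfl
    rw [e1, hGdef]
    calc ((‖∑' n, fn n ξ‖₊ : ℝ≥0) : ℝ≥0∞) ≤ ((∑' n, ‖fn n ξ‖₊ : ℝ≥0) : ℝ≥0∞) := by
          exact_mod_cast ENNReal.coe_le_coe.2 (nnnorm_tsum_le hξ)
      _ = ∑' n, (‖fn n ξ‖₊ : ℝ≥0∞) := ENNReal.coe_tsum hξ
  have hfinal : eLpNorm (expConvOp h q u) (ENNReal.ofReal p') muE ≤
      coefSum q A * eLpNorm u (ENNReal.ofReal p') muE := by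
    rw [eLpNorm_ofReal_eq hp0]
    refine le_trans ?_ hGle
    refine ENNReal.rpow_le_rpow ?_ (one_div_nonneg.2 hp0.le)
    refine lintegral_mono_ae (hle.mono fun ξ hξ => ?_)
    exact ENNReal.rpow_le_rpow hξ hp0.le
  refine ⟨⟨haesm, ?_⟩, hfinal⟩
  exact lt_of_le_of_lt hfinal (lt_top_iff_ne_top.2 hfin2)

/-! ### Bound on the folded product of operators -/

lemma gamma_fold_bound {p' q' : ℝ} (hpq : p'.HolderConjugate q') {N : ℕ}
    {h : Fin N → E → ℝ} (hh : ∀ i, Integrable (h i) muE) (P : Fin N → Polynomial ℝ)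
    (hS : ∀ i, coefSum (P i) (∫⁻ x, (‖h i x‖₊ : ℝ≥0∞)) ≠ ⊤) (l : List (Fin N)) :
    ∀ {u : E → E}, MemLp u (ENNReal.ofReal p') muE →
      MemLp ((l.map fun i => expConvOp (h i) (P i)).foldr (fun f v => f v) u)
          (ENNReal.ofReal p') muE ∧
        eLpNorm ((l.map fun i => expConvOp (h i) (P i)).foldr (fun f v => f v) u)
            (ENNReal.ofReal p') muE ≤
          (l.map fun i => coefSum (P i) (∫⁻ x, (‖h i x‖₊ : ℝ≥0∞))).prod *
            eLpNorm u (ENNReal.ofReal p') muE := by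
  induction l with
  | nil => intro u hu; exact ⟨hu, by simp⟩
  | cons i tl ih =>
    intro u hu
    obtain ⟨m1, b1⟩ := ih hu
    obtain ⟨m2, b2⟩ := expConvOp_bound hpq (hh i) (P i) m1 (hS i)
    refine ⟨m2, ?_⟩
    refine b2.trans ?_
    calc coefSum (P i) (∫⁻ x, (‖h i x‖₊ : ℝ≥0∞)) *
          eLpNorm ((tl.map fun j => expConvOp (h j) (P j)).foldr (fun f v => f v) u)
            (ENNReal.ofReal p') muE
        ≤ coefSum (P i) (∫⁻ x, (‖h i x‖₊ : ℝ≥0∞)) *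
            ((tl.map fun j => coefSum (P j) (∫⁻ x, (‖h j x‖₊ : ℝ≥0∞))).prod *
              eLpNorm u (ENNReal.ofReal p') muE) := mul_le_mul_right b1 _
      _ = ((i :: tl).map fun j => coefSum (P j) (∫⁻ x, (‖h j x‖₊ : ℝ≥0∞))).prod *
            eLpNorm u (ENNReal.ofReal p') muE := by
          rw [List.map_cons, List.prod_cons, mul_assoc]

lemma opNorm_fold_le {p' q' : ℝ} (hpq : p'.HolderConjugate q') {N : ℕ}
    {h : Fin N → E → ℝ} (hh : ∀ i, Integrable (h i) muE) (P : Fin N → Polynomial ℝ)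
    (hS : ∀ i, coefSum (P i) (∫⁻ x, (‖h i x‖₊ : ℝ≥0∞)) ≠ ⊤) :
    opNorm (ENNReal.ofReal p')
        (fun u => ((List.finRange N).map fun i => expConvOp (h i) (P i)).foldr
          (fun f v => f v) u) ≤
      ∏ i, coefSum (P i) (∫⁻ x, (‖h i x‖₊ : ℝ≥0∞)) := by
  refine iSup_le fun u => ?_
  have hb := (gamma_fold_bound hpq hh P hS (List.finRange N) u.2.1).2
  refine hb.trans ?_
  have e1 : ((List.finRange N).map fun i => coefSum (P i) (∫⁻ x, (‖h i x‖₊ : ℝ≥0∞))).prod =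
      ∏ i, coefSum (P i) (∫⁻ x, (‖h i x‖₊ : ℝ≥0∞)) := by
    simp [Finset.prod_eq_multiset_prod, List.ofFn_eq_map]
  rw [e1]
  calc (∏ i, coefSum (P i) (∫⁻ x, (‖h i x‖₊ : ℝ≥0∞))) * eLpNorm u.1 (ENNReal.ofReal p') muE
      ≤ (∏ i, coefSum (P i) (∫⁻ x, (‖h i x‖₊ : ℝ≥0∞))) * 1 := mul_le_mul_right u.2.2 _
    _ = ∏ i, coefSum (P i) (∫⁻ x, (‖h i x‖₊ : ℝ≥0∞)) := mul_one _

/-! ### Series estimates for `coefSum` -/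

lemma enorm_tsum_le (a : ℕ → ℝ) : (‖∑' n, a n‖₊ : ℝ≥0∞) ≤ ∑' n, (‖a n‖₊ : ℝ≥0∞) := by
  by_cases hfin : (∑' n, (‖a n‖₊ : ℝ≥0∞)) = ⊤
  · rw [hfin]; exact le_top
  · have hs : Summable fun n => ‖a n‖₊ := ENNReal.tsum_coe_ne_top_iff_summable.1 hfin
    rw [← ENNReal.coe_tsum hs]
    exact_mod_cast nnnorm_tsum_le hs

lemma coeff_mul_le {f F g G : Polynomial ℝ} (hf : ∀ n, |f.coeff n| ≤ F.coeff n)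
    (hg : ∀ n, |g.coeff n| ≤ G.coeff n) : ∀ n, |(f * g).coeff n| ≤ (F * G).coeff n := by
  intro n
  rw [Polynomial.coeff_mul, Polynomial.coeff_mul]
  refine (Finset.abs_sum_le_sum_abs _ _).trans (Finset.sum_le_sum fun x _ => ?_)
  rw [abs_mul]
  exact mul_le_mul (hf _) (hg _) (abs_nonneg _) ((abs_nonneg _).trans (hf _))

lemma coeff_pow_le {f F : Polynomial ℝ} (hf : ∀ n, |f.coeff n| ≤ F.coeff n) :
    ∀ k n, |(f ^ k).coeff n| ≤ (F ^ k).coeff n := by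
  intro k
  induction k with
  | zero =>
    intro n
    simp only [pow_zero, Polynomial.coeff_one]
    split <;> simp
  | succ k ih =>
    intro n
    rw [pow_succ, pow_succ]
    exact coeff_mul_le ih hf n

lemma eval_nonneg' {P : Polynomial ℝ} (hP : ∀ n, 0 ≤ P.coeff n) {H : ℝ} (hH : 0 ≤ H) :
    0 ≤ P.eval H := by
  rw [Polynomial.eval_eq_sum_range (p := P) H]
  exact Finset.sum_nonneg fun n _ => mul_nonneg (hP n) (pow_nonneg hH n)

lemma coeff_le_eval_one {P : Polynomial ℝ} (hP : ∀ n, 0 ≤ P.coeff n) (n : ℕ) :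
    P.coeff n ≤ P.eval 1 := by
  by_cases hn : n ≤ P.natDegree
  · rw [Polynomial.eval_eq_sum_range (p := P) 1]
    have hmem : n ∈ Finset.range (P.natDegree + 1) := Finset.mem_range.2 (Nat.lt_succ_of_le hn)
    calc P.coeff n = P.coeff n * 1 ^ n := by rw [one_pow, mul_one]
      _ ≤ ∑ i ∈ Finset.range (P.natDegree + 1), P.coeff i * 1 ^ i :=
        Finset.single_le_sum (fun i _ => mul_nonneg (hP i) (pow_nonneg zero_le_one i)) hmem
  · push_neg at hn
    rw [Polynomial.coeff_eq_zero_of_natDegree_lt hn]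
    exact eval_nonneg' hP zero_le_one

lemma tsum_coeff_eval {P : Polynomial ℝ} (hP : ∀ n, 0 ≤ P.coeff n) {H : ℝ} (hH : 0 ≤ H) :
    ∑' n, ENNReal.ofReal (P.coeff n) * ENNReal.ofReal H ^ n = ENNReal.ofReal (P.eval H) := by
  rw [tsum_eq_sum (s := Finset.range (P.natDegree + 1)) (f := fun n =>
      ENNReal.ofReal (P.coeff n) * ENNReal.ofReal H ^ n) ?side]
  case side =>
    intro n hn
    have h1 : P.natDegree + 1 ≤ n := le_of_not_gt fun hlt => hn (Finset.mem_range.2 hlt)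
    simp [Polynomial.coeff_eq_zero_of_natDegree_lt (Nat.lt_of_succ_le h1)]
  · rw [Polynomial.eval_eq_sum_range (p := P) H,
      ENNReal.ofReal_sum_of_nonneg fun i _ => mul_nonneg (hP i) (pow_nonneg hH i)]
    refine Finset.sum_congr rfl fun n _ => ?_
    rw [ENNReal.ofReal_mul (hP n), ENNReal.ofReal_pow hH]

lemma coefSum_poly_le {r R : Polynomial ℝ} (hR : ∀ n, |r.coeff n| ≤ R.coeff n)
    {H : ℝ} (hH : 0 ≤ H) :
    coefSum r (ENNReal.ofReal H) ≤ ENNReal.ofReal (Real.exp (R.eval H)) := by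
  have hRpos : ∀ n, 0 ≤ R.coeff n := fun n => (abs_nonneg _).trans (hR n)
  have hRkpos : ∀ k n, 0 ≤ (R ^ k).coeff n := fun k n =>
    (abs_nonneg _).trans (coeff_pow_le hR k n)
  have hevnn : 0 ≤ R.eval H := eval_nonneg' hRpos hH
  calc coefSum r (ENNReal.ofReal H)
      ≤ ∑' n, (∑' k, ENNReal.ofReal (|(r ^ k).coeff n| / k.factorial)) *
          ENNReal.ofReal H ^ n := by
        refine ENNReal.tsum_le_tsum fun n => mul_le_mul_left ?_ _
        rw [expCoeff]
        refine (enorm_tsum_le _).trans (le_of_eq (tsum_congr fun k => ?_))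
        rw [← enorm_eq_nnnorm, Real.enorm_eq_ofReal_abs, abs_div, Nat.abs_cast]
    _ = ∑' k, ∑' n, ENNReal.ofReal (|(r ^ k).coeff n| / k.factorial) *
          ENNReal.ofReal H ^ n := by
        rw [← ENNReal.tsum_comm]
        exact tsum_congr fun n => ENNReal.tsum_mul_right.symm
    _ ≤ ∑' k, ∑' n, ENNReal.ofReal ((R ^ k).coeff n / k.factorial) *
          ENNReal.ofReal H ^ n := by
        refine ENNReal.tsum_le_tsum fun k => ENNReal.tsum_le_tsum fun n =>
          mul_le_mul_left (ENNReal.ofReal_le_ofReal ?_) _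
        exact div_le_div₀ (hRkpos k n) (coeff_pow_le hR k n) (by positivity) le_rfl
    _ = ∑' k, ENNReal.ofReal ((R.eval H) ^ k / k.factorial) := by
        refine tsum_congr fun k => ?_
        have e1 : ∀ n : ℕ, ENNReal.ofReal ((R ^ k).coeff n / k.factorial) =
            ENNReal.ofReal (1 / k.factorial) * ENNReal.ofReal ((R ^ k).coeff n) := by
          intro n
          rw [← ENNReal.ofReal_mul (by positivity)]
          congr 1
          field_simp
        calc ∑' n, ENNReal.ofReal ((R ^ k).coeff n / k.factorial) * ENNReal.ofReal H ^ n
            = ENNReal.ofReal (1 / k.factorial) *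
                ∑' n, ENNReal.ofReal ((R ^ k).coeff n) * ENNReal.ofReal H ^ n := by
              rw [← ENNReal.tsum_mul_left]
              exact tsum_congr fun n => by rw [e1 n, mul_assoc]
          _ = ENNReal.ofReal (1 / k.factorial) * ENNReal.ofReal ((R ^ k).eval H) :=
              by rw [tsum_coeff_eval (hRkpos k) hH]
          _ = ENNReal.ofReal ((R.eval H) ^ k / k.factorial) := by
              rw [← ENNReal.ofReal_mul (by positivity), Polynomial.eval_pow]
              congr 1
              field_simp
    _ = ENNReal.ofReal (Real.exp (R.eval H)) := by
        rw [← ENNReal.ofReal_tsum_of_nonneg (fun k => by positivity)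
          (Real.summable_pow_div_factorial _)]
        congr 1
        rw [Real.exp_eq_exp_ℝ, NormedSpace.exp_eq_tsum_div]

lemma expCoeff_C_add {c₀ : ℝ} {r R : Polynomial ℝ} (hR : ∀ n, |r.coeff n| ≤ R.coeff n)
    (n : ℕ) : expCoeff (Polynomial.C c₀ + r) n = Real.exp c₀ * expCoeff r n := by
  have hRpos : ∀ m, 0 ≤ R.coeff m := fun m => (abs_nonneg _).trans (hR m)
  have hRkpos : ∀ k m, 0 ≤ (R ^ k).coeff m := fun k m =>
    (abs_nonneg _).trans (coeff_pow_le hR k m)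
  have hg : Summable fun k => ‖(r ^ k).coeff n / k.factorial‖ := by
    refine Summable.of_nonneg_of_le (fun k => norm_nonneg _) (fun k => ?_)
      (Real.summable_pow_div_factorial (R.eval 1))
    rw [Real.norm_eq_abs, abs_div, Nat.abs_cast]
    refine div_le_div₀ (pow_nonneg (eval_nonneg' hRpos zero_le_one) k) ?_ (by positivity) le_rfl
    refine (coeff_pow_le hR k n).trans ?_
    calc (R ^ k).coeff n ≤ (R ^ k).eval 1 := coeff_le_eval_one (hRkpos k) n
      _ = (R.eval 1) ^ k := by rw [Polynomial.eval_pow]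
  have hf : Summable fun k => ‖c₀ ^ k / k.factorial‖ := by
    refine Summable.of_nonneg_of_le (fun k => norm_nonneg _) (fun k => ?_)
      (Real.summable_pow_div_factorial |c₀|)
    rw [Real.norm_eq_abs, abs_div, Nat.abs_cast, abs_pow]
  have key := tsum_mul_tsum_eq_tsum_sum_range_of_summable_norm hf hg
  have hterm : ∀ m, ((Polynomial.C c₀ + r) ^ m).coeff n / m.factorial =
      ∑ k ∈ Finset.range (m + 1),
        c₀ ^ k / k.factorial * ((r ^ (m - k)).coeff n / (m - k).factorial) := by
    intro m
    have e1 : ((Polynomial.C c₀ + r) ^ m).coeff n =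
        ∑ k ∈ Finset.range (m + 1), c₀ ^ k * (r ^ (m - k)).coeff n * (m.choose k) := by
      rw [add_pow, Polynomial.finset_sum_coeff]
      refine Finset.sum_congr rfl fun j _ => ?_
      rw [← Polynomial.C_eq_natCast, ← Polynomial.C_pow, mul_comm, ← mul_assoc,
        ← Polynomial.C_mul, Polynomial.coeff_C_mul]
      ring
    rw [e1, Finset.sum_div]
    refine Finset.sum_congr rfl fun k hk => ?_
    have hk' : k ≤ m := Nat.lt_succ_iff.1 (Finset.mem_range.1 hk)
    have hc : (m.choose k : ℝ) = m.factorial / (k.factorial * (m - k).factorial) := by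
      rw [_root_.eq_div_iff (by positivity)]
      push_cast [← Nat.choose_mul_factorial_mul_factorial hk']
      ring
    rw [hc]
    have hm0 : (m.factorial : ℝ) ≠ 0 := by positivity
    have hk0 : (k.factorial : ℝ) ≠ 0 := by positivity
    have hmk0 : ((m - k).factorial : ℝ) ≠ 0 := by positivity
    field_simp
  calc expCoeff (Polynomial.C c₀ + r) n
      = ∑' m, ∑ k ∈ Finset.range (m + 1),
          c₀ ^ k / k.factorial * ((r ^ (m - k)).coeff n / (m - k).factorial) := by
        rw [expCoeff]; exact tsum_congr hterm
    _ = (∑' k, c₀ ^ k / (k.factorial : ℝ)) * ∑' k, (r ^ k).coeff n / k.factorial :=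
        key.symm
    _ = Real.exp c₀ * expCoeff r n := by
        rw [expCoeff, Real.exp_eq_exp_ℝ, NormedSpace.exp_eq_tsum_div]

lemma coefSum_C_add {c₀ : ℝ} {r R : Polynomial ℝ} (hR : ∀ n, |r.coeff n| ≤ R.coeff n)
    (A : ℝ≥0∞) :
    coefSum (Polynomial.C c₀ + r) A = ENNReal.ofReal (Real.exp c₀) * coefSum r A := by
  rw [coefSum, coefSum, ← ENNReal.tsum_mul_left]
  refine tsum_congr fun n => ?_
  rw [expCoeff_C_add hR, ← mul_assoc]
  congr 1
  rw [← enorm_eq_nnnorm, Real.enorm_eq_ofReal_abs, abs_mul, abs_of_nonneg (Real.exp_pos c₀).le,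
    ENNReal.ofReal_mul (Real.exp_pos c₀).le, ← enorm_eq_nnnorm, Real.enorm_eq_ofReal_abs]

/-! ### Specialization to `gammaPoly` -/

lemma hR_linquad (c₁ c₂ : ℝ) : ∀ n,
    |(Polynomial.C c₁ * Polynomial.X - Polynomial.C c₂ * Polynomial.X ^ 2).coeff n| ≤
      (Polynomial.C |c₁| * Polynomial.X + Polynomial.C |c₂| * Polynomial.X ^ 2).coeff n := by
  intro n
  simp only [Polynomial.coeff_sub, Polynomial.coeff_add, Polynomial.coeff_C_mul,
    Polynomial.coeff_X, Polynomial.coeff_X_pow]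
  match n with
  | 0 => norm_num
  | 1 => norm_num
  | 2 => norm_num
  | (m + 3) =>
    have h1 : m + 3 ≠ 1 := by omega
    have h2 : m + 3 ≠ 2 := by omega
    simp [h1, h2]

lemma RPoly_eval (c₁ c₂ H : ℝ) :
    (Polynomial.C |c₁| * Polynomial.X + Polynomial.C |c₂| * Polynomial.X ^ 2).eval H =
      |c₁| * H + |c₂| * H ^ 2 := by
  simp [Polynomial.eval_add, Polynomial.eval_mul, Polynomial.eval_pow]

lemma coefSum_CXX2_le (c₀ c₁ c₂ : ℝ) {H : ℝ} (hH : 0 ≤ H) :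
    coefSum (Polynomial.C c₀ + (Polynomial.C c₁ * Polynomial.X -
        Polynomial.C c₂ * Polynomial.X ^ 2)) (ENNReal.ofReal H) ≤
      ENNReal.ofReal (Real.exp (c₀ + (|c₁| * H + |c₂| * H ^ 2))) := by
  rw [coefSum_C_add (hR_linquad c₁ c₂)]
  refine le_trans (mul_le_mul_right (coefSum_poly_le (hR_linquad c₁ c₂) hH) _) (le_of_eq ?_)
  rw [RPoly_eval, ← ENNReal.ofReal_mul (Real.exp_pos c₀).le, ← Real.exp_add]

lemma gammaPoly_eq (β τ l : ℝ) : gammaPoly β τ l =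
    Polynomial.C (β * l - τ * l ^ 2 / 2) + (Polynomial.C (β - τ * l) * Polynomial.X -
      Polynomial.C (τ / 2) * Polynomial.X ^ 2) := by
  rw [gammaPoly, add_sub_assoc]

lemma neg_gammaPoly_eq (β τ l : ℝ) : -gammaPoly β τ l =
    Polynomial.C (-(β * l - τ * l ^ 2 / 2)) + (Polynomial.C (-(β - τ * l)) * Polynomial.X -
      Polynomial.C (-(τ / 2)) * Polynomial.X ^ 2) := by
  rw [gammaPoly]
  simp only [map_neg]
  ring

lemma coefSum_gammaPoly_le (β τ l : ℝ) {H : ℝ} (hH : 0 ≤ H) :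
    coefSum (gammaPoly β τ l) (ENNReal.ofReal H) ≤
      ENNReal.ofReal (Real.exp ((β * l - τ * l ^ 2 / 2) +
        (|β - τ * l| * H + |τ / 2| * H ^ 2))) := by
  rw [gammaPoly_eq]
  exact coefSum_CXX2_le _ _ _ hH

lemma coefSum_neg_gammaPoly_le (β τ l : ℝ) {H : ℝ} (hH : 0 ≤ H) :
    coefSum (-gammaPoly β τ l) (ENNReal.ofReal H) ≤
      ENNReal.ofReal (Real.exp (-(β * l - τ * l ^ 2 / 2) +
        (|β - τ * l| * H + |τ / 2| * H ^ 2))) := by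
  rw [neg_gammaPoly_eq]
  refine (coefSum_CXX2_le _ _ _ hH).trans (le_of_eq ?_)
  rw [abs_neg, abs_neg]

end Proof

/-- Remark 1.2: `η(t) ≤ ∏ᵢ exp(3|bᵢ(t)|(|hᵢ|₁+|λᵢ|) − t αᵢ)` where
`αᵢ = λᵢ²/2 − (3/2)(|hᵢ|₁² + 2|λᵢ||hᵢ|₁)`; and `αᵢ > 0` provided
`|λᵢ| > (√12 + 3)|hᵢ|₁`. -/
theorem statement9 (p q : ℝ) (hp1 : 3 / 2 < p) (hp2 : p < 2) (hq : 1 / q = 2 / p - 1 / 3)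
    (N : ℕ) (h : Fin N → E → ℝ) (lam : Fin N → ℝ) (b : Fin N → ℝ → ℝ)
    (hKD : KernelData h b) :
    (∀ t : ℝ, 0 ≤ t →
      eta h lam b p q t ≤
        ENNReal.ofReal (∏ i, Real.exp (3 * |b i t| * (l1norm (h i) + |lam i|) -
          t * (lam i ^ 2 / 2 -
            3 / 2 * (l1norm (h i) ^ 2 + 2 * |lam i| * l1norm (h i)))))) ∧
    ((∀ i, (Real.sqrt 12 + 3) * l1norm (h i) < |lam i|) →
      ∀ i, 0 < lam i ^ 2 / 2 -
        3 / 2 * (l1norm (h i) ^ 2 + 2 * |lam i| * l1norm (h i))) := by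
  obtain ⟨hInt, hbCont, hb0⟩ := hKD
  have hl1nn : ∀ i, 0 ≤ l1norm (h i) := fun i => integral_nonneg fun ξ => abs_nonneg _
  constructor
  · intro t ht
    have hp0 : 0 < p := by linarith
    have hp1 : 1 < p := by linarith
    have h3p : 0 < 3 - p := by linarith
    have hp2' : 1 < 3 * p / (3 - p) := by
      rw [lt_div_iff₀ h3p]; linarith
    have hq0 : 0 < q := by
      have h2p : 1 < 2 / p := by rw [lt_div_iff₀ hp0]; linarith
      have h1 : 0 < 1 / q := by rw [hq]; linarith
      exact one_div_pos.1 h1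
    have hq1 : 1 < q := by
      have h2p : 2 / p < 4 / 3 := by rw [div_lt_div_iff₀ hp0 (by norm_num)]; linarith
      have h2 : 1 / q < 1 := by rw [hq]; linarith
      exact (div_lt_one hq0).1 h2
    have hc1 : p.HolderConjugate (p / (p - 1)) := Real.HolderConjugate.conjExponent hp1
    have hc2 : (3 * p / (3 - p)).HolderConjugate ((3 * p / (3 - p)) / (3 * p / (3 - p) - 1)) :=
      Real.HolderConjugate.conjExponent hp2'
    have hc3 : q.HolderConjugate (q / (q - 1)) := Real.HolderConjugate.conjExponent hq1
    have hAeq : ∀ i, (∫⁻ x, (‖h i x‖₊ : ℝ≥0∞)) = ENNReal.ofReal (l1norm (h i)) := by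
      intro i
      change ∫⁻ x, ‖h i x‖ₑ = _
      rw [← ofReal_integral_norm_eq_lintegral_enorm (hInt i)]
      congr 1
    set g : Fin N → ℝ := fun i => (b i t * lam i - t * lam i ^ 2 / 2) +
      (|b i t - t * lam i| * l1norm (h i) + |t / 2| * l1norm (h i) ^ 2) with hgdef
    set g' : Fin N → ℝ := fun i => -(b i t * lam i - t * lam i ^ 2 / 2) +
      (|b i t - t * lam i| * l1norm (h i) + |t / 2| * l1norm (h i) ^ 2) with hgdef'
    have hbound : ∀ i, coefSum (gammaPoly (b i t) t (lam i)) (∫⁻ x, (‖h i x‖₊ : ℝ≥0∞)) ≤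
        ENNReal.ofReal (Real.exp (g i)) := by
      intro i
      rw [hAeq i]
      exact coefSum_gammaPoly_le _ _ _ (hl1nn i)
    have hbound' : ∀ i, coefSum (-gammaPoly (b i t) t (lam i)) (∫⁻ x, (‖h i x‖₊ : ℝ≥0∞)) ≤
        ENNReal.ofReal (Real.exp (g' i)) := by
      intro i
      rw [hAeq i]
      exact coefSum_neg_gammaPoly_le _ _ _ (hl1nn i)
    have hne : ∀ i, coefSum (gammaPoly (b i t) t (lam i)) (∫⁻ x, (‖h i x‖₊ : ℝ≥0∞)) ≠ ⊤ :=
      fun i => ne_top_of_le_ne_top ENNReal.ofReal_ne_top (hbound i)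
    have hne' : ∀ i, coefSum (-gammaPoly (b i t) t (lam i)) (∫⁻ x, (‖h i x‖₊ : ℝ≥0∞)) ≠ ⊤ :=
      fun i => ne_top_of_le_ne_top ENNReal.ofReal_ne_top (hbound' i)
    have hop1 : opNorm (ENNReal.ofReal p) (GammaOp h lam b t) ≤
        ∏ i, ENNReal.ofReal (Real.exp (g i)) :=
      le_trans (opNorm_fold_le hc1 hInt _ hne) (Finset.prod_le_prod' fun i _ => hbound i)
    have hop2 : opNorm (ENNReal.ofReal (3 * p / (3 - p))) (GammaOp h lam b t) ≤
        ∏ i, ENNReal.ofReal (Real.exp (g i)) :=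
      le_trans (opNorm_fold_le hc2 hInt _ hne) (Finset.prod_le_prod' fun i _ => hbound i)
    have hop3 : opNorm (ENNReal.ofReal q) (GammaInvOp h lam b t) ≤
        ∏ i, ENNReal.ofReal (Real.exp (g' i)) :=
      le_trans (opNorm_fold_le hc3 hInt _ hne') (Finset.prod_le_prod' fun i _ => hbound' i)
    have heta : eta h lam b p q t ≤ (∏ i, ENNReal.ofReal (Real.exp (g i))) *
        (∏ i, ENNReal.ofReal (Real.exp (g i))) * ∏ i, ENNReal.ofReal (Real.exp (g' i)) :=
      mul_le_mul' (mul_le_mul' hop1 hop2) hop3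
    refine heta.trans ?_
    have eA : ∏ i, ENNReal.ofReal (Real.exp (g i)) = ENNReal.ofReal (∏ i, Real.exp (g i)) :=
      (ENNReal.ofReal_prod_of_nonneg fun i _ => (Real.exp_pos _).le).symm
    have eA' : ∏ i, ENNReal.ofReal (Real.exp (g' i)) = ENNReal.ofReal (∏ i, Real.exp (g' i)) :=
      (ENNReal.ofReal_prod_of_nonneg fun i _ => (Real.exp_pos _).le).symm
    have hprodnn : (0:ℝ) ≤ ∏ i, Real.exp (g i) :=
      Finset.prod_nonneg fun i _ => (Real.exp_pos _).le
    have hprodnn' : (0:ℝ) ≤ ∏ i, Real.exp (g' i) :=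
      Finset.prod_nonneg fun i _ => (Real.exp_pos _).le
    rw [eA, eA', ← ENNReal.ofReal_mul hprodnn,
      ← ENNReal.ofReal_mul (mul_nonneg hprodnn hprodnn)]
    refine ENNReal.ofReal_le_ofReal ?_
    rw [← Finset.prod_mul_distrib, ← Finset.prod_mul_distrib]
    refine Finset.prod_le_prod (fun i _ => by positivity) fun i _ => ?_
    rw [← Real.exp_add, ← Real.exp_add]
    refine Real.exp_le_exp.2 ?_
    have hH := hl1nn i
    have habs : |b i t - t * lam i| ≤ |b i t| + t * |lam i| := by
      refine (abs_sub _ _).trans ?_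
      rw [abs_mul, abs_of_nonneg ht]
    have hbl : b i t * lam i ≤ |b i t| * |lam i| := by
      refine (le_abs_self _).trans (le_of_eq ?_)
      rw [abs_mul]
    have ht2 : |t / 2| = t / 2 := abs_of_nonneg (by linarith)
    have hk1 : |b i t - t * lam i| * l1norm (h i) ≤ (|b i t| + t * |lam i|) * l1norm (h i) :=
      mul_le_mul_of_nonneg_right habs hH
    have hbH : 0 ≤ |b i t| * |lam i| := mul_nonneg (abs_nonneg _) (abs_nonneg _)
    simp only [hgdef, hgdef']
    nlinarith [hk1, hbl, hbH, ht2, mul_nonneg (abs_nonneg (b i t)) hH]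
  · intro hcond i
    have hH := hl1nn i
    have hci := hcond i
    have hs0 : (0:ℝ) ≤ Real.sqrt 12 := Real.sqrt_nonneg _
    have hs : Real.sqrt 12 ^ 2 = 12 := Real.sq_sqrt (by norm_num)
    have hl2 : lam i ^ 2 = |lam i| ^ 2 := (sq_abs _).symm
    nlinarith [hci, hH, hs0, hs, hl2,
      sq_nonneg (|lam i| - 3 * l1norm (h i) - Real.sqrt 12 * l1norm (h i)),
      mul_nonneg hs0 hH, abs_nonneg (lam i)]

end RandomVorticity
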